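/- The Leech–Sloane 9-dimensional kissing configuration, consisting of the 288 vectors obtained by placing arbitrary signs ±1 on the four 1-entries of each of the 18 codewords of the weight-4 distance-4 code of length 9, together with the 18 vectors (±2, 0, ..., 0) and their coordinate permutations, is a set of 306 vectors in ℝ^9 each of squared norm 4 in which every pair of distinct vectors has inner product at most 2. -/

import Mathlib

/-- The 18 codewords of the binary code of length 9, constant weight 4, minimum distance 4. -/
def code9 : List (Fin 9 → ℕ) :=
  [ ![1,1,0,1,1,0,0,0,0], ![1,1,0,0,0,1,0,0,1], ![1,1,0,0,0,0,1,1,0],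
    ![1,0,1,1,0,1,0,0,0], ![1,0,1,0,1,0,0,1,0], ![1,0,1,0,0,0,1,0,1],
    ![1,0,0,1,0,0,0,1,1], ![1,0,0,0,1,1,1,0,0], ![0,1,1,1,0,0,1,0,0],
    ![0,1,1,0,1,1,0,0,0], ![0,1,1,0,0,0,0,1,1], ![0,1,0,1,0,1,0,1,0],
    ![0,1,0,0,1,0,1,0,1], ![0,0,1,1,1,0,0,0,1], ![0,0,1,0,0,1,1,1,0],
    ![0,0,0,1,1,0,1,1,0], ![0,0,0,1,0,1,1,0,1], ![0,0,0,0,1,1,0,1,1] ]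

/-- The Leech–Sloane nine-dimensional kissing configuration: arbitrary signs on the
supports of the codewords, together with all vectors `(±2, 0, …, 0)` up to permutation. -/
def LS9 : Set (Fin 9 → ℝ) :=
  {v | ∃ c ∈ code9, ∀ i, (c i = 1 → (v i = 1 ∨ v i = -1)) ∧ (c i = 0 → v i = 0)} ∪
  {v | ∃ i, (v i = 2 ∨ v i = -2) ∧ ∀ j, j ≠ i → v j = 0}

/-! ### Auxiliary definitions -/

def supp (c : Fin 9 → ℕ) : List (Fin 9) := (List.finRange 9).filter (fun i => c i = 1)

def buildS (c : Fin 9 → ℕ) (T : List (Fin 9)) : Fin 9 → ℤ :=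
  fun i => if c i = 1 then (if i ∈ T then 1 else -1) else 0

def eZ (i : Fin 9) (x : ℤ) : Fin 9 → ℤ := fun j => if j = i then x else 0

def Lfull : List (Fin 9 → ℤ) :=
  (code9.flatMap (fun c => (supp c).sublists.map (buildS c))) ++
  ((List.finRange 9).flatMap (fun i => [eZ i 2, eZ i (-2)]))

def castV (w : Fin 9 → ℤ) : Fin 9 → ℝ := fun i => (w i : ℝ)

def enc (w : Fin 9 → ℤ) : ℕ := ∑ i, (w i + 2).toNat * 5 ^ i.val

/-! ### Decidable facts -/

set_option maxRecDepth 100000 in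
lemma Lfull_len : Lfull.length = 306 := by decide

set_option maxRecDepth 100000 in
set_option maxHeartbeats 4000000 in
lemma Lfull_nodup_enc : (Lfull.map enc).Nodup := by decide

lemma Lfull_nodup : Lfull.Nodup := Lfull_nodup_enc.of_map enc

lemma c01 : ∀ c ∈ code9, ∀ i, c i = 0 ∨ c i = 1 := by decide

set_option maxRecDepth 10000 in
lemma wt4 : ∀ c ∈ code9, (Finset.univ.filter fun i => c i = 1).card = 4 := by decide

set_option maxRecDepth 10000 in
set_option maxHeartbeats 4000000 in
lemma inter2 : ∀ c ∈ code9, ∀ d ∈ code9,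
    c = d ∨ (Finset.univ.filter fun i => c i = 1 ∧ d i = 1).card ≤ 2 := by decide

/-! ### Basic lemmas -/

lemma castV_inj : Function.Injective castV := by
  intro w w' h
  funext i
  have := congrFun h i
  simpa [castV] using this

lemma signZero {c : Fin 9 → ℕ} (hc : c ∈ code9) {u : Fin 9 → ℝ}
    (hu : ∀ i, (c i = 1 → (u i = 1 ∨ u i = -1)) ∧ (c i = 0 → u i = 0))
    {i : Fin 9} (h : ¬ c i = 1) : u i = 0 := by
  rcases c01 c hc i with h0 | h1
  · exact (hu i).2 h0
  · exact absurd h1 h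

/-! ### The set equality -/

lemma LS9_eq : LS9 = castV '' {w | w ∈ Lfull} := by
  classical
  ext v
  constructor
  · rintro (⟨c, hc, hv⟩ | ⟨i, hv2, hz⟩)
    · refine ⟨buildS c ((supp c).filter (fun i => decide (v i = 1))), ?_, ?_⟩
      · refine List.mem_append_left _ (List.mem_flatMap.mpr ⟨c, hc, List.mem_map.mpr
          ⟨_, List.mem_sublists.mpr List.filter_sublist, rfl⟩⟩)
      · funext i
        rcases c01 c hc i with h0 | h1
        · have : ¬ c i = 1 := by omega
          simp [castV, buildS, this, (hv i).2 h0]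
        · have hi : i ∈ supp c := by
            simp [supp, List.mem_filter, List.mem_finRange, h1]
          rcases (hv i).1 h1 with h | h
          · have hT : i ∈ (supp c).filter (fun i => decide (v i = 1)) :=
              List.mem_filter.mpr ⟨hi, by simp [h]⟩
            simp [castV, buildS, h1, hT, h]
          · have hT : i ∉ (supp c).filter (fun i => decide (v i = 1)) := by
              intro hmem
              have := (List.mem_filter.mp hmem).2
              simp at this
              rw [h] at this; norm_num at this
            simp [castV, buildS, h1, hT, h]
    · rcases hv2 with h | h
      · refine ⟨eZ i 2, ?_, ?_⟩
        · refine List.mem_append_right _ (List.mem_flatMap.mpr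
            ⟨i, List.mem_finRange i, by simp⟩)
        · funext j
          by_cases hj : j = i
          · subst hj; simp [castV, eZ, h]
          · simp [castV, eZ, hj, hz j hj]
      · refine ⟨eZ i (-2), ?_, ?_⟩
        · refine List.mem_append_right _ (List.mem_flatMap.mpr
            ⟨i, List.mem_finRange i, by simp⟩)
        · funext j
          by_cases hj : j = i
          · subst hj; simp [castV, eZ, h]
          · simp [castV, eZ, hj, hz j hj]
  · rintro ⟨w, hw, rfl⟩
    rcases List.mem_append.mp hw with h | h
    · obtain ⟨c, hc, h2⟩ := List.mem_flatMap.mp h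
      obtain ⟨T, _, rfl⟩ := List.mem_map.mp h2
      left
      refine ⟨c, hc, fun i => ⟨fun h1 => ?_, fun h0 => ?_⟩⟩
      · by_cases hiT : i ∈ T
        · left; simp [castV, buildS, h1, hiT]
        · right; simp [castV, buildS, h1, hiT]
      · have : ¬ c i = 1 := by omega
        simp [castV, buildS, this]
    · obtain ⟨i, _, hmem⟩ := List.mem_flatMap.mp h
      simp only [List.mem_cons, List.mem_singleton, List.not_mem_nil, or_false] at hmem
      right
      rcases hmem with rfl | rfl
      · exact ⟨i, Or.inl (by simp [castV, eZ]), fun j hj => by simp [castV, eZ, hj]⟩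
      · exact ⟨i, Or.inr (by simp [castV, eZ]), fun j hj => by simp [castV, eZ, hj]⟩

/-! ### Norm and inner product lemmas (over ℝ, abstract) -/

lemma sum_restrict {c : Fin 9 → ℕ} (hc : c ∈ code9) {u : Fin 9 → ℝ}
    (hu : ∀ i, (c i = 1 → (u i = 1 ∨ u i = -1)) ∧ (c i = 0 → u i = 0))
    (f : Fin 9 → ℝ) (hf : ∀ i, u i = 0 → u i * f i = 0) :
    ∑ i, u i * f i = ∑ i ∈ Finset.univ.filter (fun i => c i = 1), u i * f i := by
  refine (Finset.sum_subset (Finset.subset_univ _) ?_).symm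
  intro x _ hx
  simp only [Finset.mem_filter, Finset.mem_univ, true_and] at hx
  exact hf x (signZero hc hu hx)

lemma norm_sign {c : Fin 9 → ℕ} (hc : c ∈ code9) {u : Fin 9 → ℝ}
    (hu : ∀ i, (c i = 1 → (u i = 1 ∨ u i = -1)) ∧ (c i = 0 → u i = 0)) :
    ∑ i, u i * u i = 4 := by
  rw [sum_restrict hc hu u (fun i h => by rw [h]; ring)]
  have h1 : ∀ i ∈ Finset.univ.filter (fun i => c i = 1), u i * u i = 1 := by
    intro i hi
    simp only [Finset.mem_filter, Finset.mem_univ, true_and] at hi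
    rcases (hu i).1 hi with h | h <;> rw [h] <;> norm_num
  rw [Finset.sum_congr rfl h1, Finset.sum_const, wt4 c hc]
  norm_num
    
lemma norm_axis {i : Fin 9} {v : Fin 9 → ℝ} (hv2 : v i = 2 ∨ v i = -2)
    (hz : ∀ j, j ≠ i → v j = 0) : ∑ j, v j * v j = 4 := by
  rw [Finset.sum_eq_single_of_mem i (Finset.mem_univ i)
    (fun b _ hb => by rw [hz b hb]; ring)]
  rcases hv2 with h | h <;> rw [h] <;> norm_num

lemma inner_sign_sign {c d : Fin 9 → ℕ} (hc : c ∈ code9) (hd : d ∈ code9)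
    {u v : Fin 9 → ℝ}
    (hu : ∀ i, (c i = 1 → (u i = 1 ∨ u i = -1)) ∧ (c i = 0 → u i = 0))
    (hv : ∀ i, (d i = 1 → (v i = 1 ∨ v i = -1)) ∧ (d i = 0 → v i = 0))
    (huv : u ≠ v) : ∑ i, u i * v i ≤ 2 := by
  rcases inter2 c hc d hd with rfl | hcard
  · -- same codeword, different signs
    obtain ⟨j, hj⟩ : ∃ j, u j ≠ v j := by
      by_contra hcon
      push_neg at hcon
      exact huv (funext hcon)
    have hcj : c j = 1 := by
      by_contra hne
      rw [signZero hc hu hne, signZero hc hv hne] at hj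
      exact hj rfl
    have hjS : j ∈ Finset.univ.filter (fun i => c i = 1) := by
      simp [hcj]
    rw [sum_restrict hc hu v (fun i h => by rw [h]; ring)]
    rw [← Finset.add_sum_erase _ _ hjS]
    have hterm : u j * v j = -1 := by
      rcases (hu j).1 hcj with h1 | h1 <;> rcases (hv j).1 hcj with h2 | h2
      · exact absurd (h1.trans h2.symm) hj
      · rw [h1, h2]; norm_num
      · rw [h1, h2]; norm_num
      · exact absurd (h1.trans h2.symm) hj
    have hrest : ∑ i ∈ (Finset.univ.filter (fun i => c i = 1)).erase j, u i * v i ≤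
        ((Finset.univ.filter (fun i => c i = 1)).erase j).card • (1 : ℝ) := by
      refine Finset.sum_le_card_nsmul _ _ _ ?_
      intro i hi
      have hiS := Finset.mem_of_mem_erase hi
      simp only [Finset.mem_filter, Finset.mem_univ, true_and] at hiS
      rcases (hu i).1 hiS with h1 | h1 <;> rcases (hv i).1 hiS with h2 | h2 <;>
        rw [h1, h2] <;> norm_num
    have hcarde : ((Finset.univ.filter (fun i => c i = 1)).erase j).card = 3 := by
      rw [Finset.card_erase_of_mem hjS, wt4 c hc]
    rw [hcarde] at hrest
    have : (3 : ℕ) • (1 : ℝ) = 3 := by norm_num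
    rw [this] at hrest
    linarith [hterm, hrest]
  · -- different codewords: support intersection has at most 2 elements
    have hres : ∑ i, u i * v i =
        ∑ i ∈ Finset.univ.filter (fun i => c i = 1 ∧ d i = 1), u i * v i := by
      refine (Finset.sum_subset (Finset.subset_univ _) ?_).symm
      intro x _ hx
      simp only [Finset.mem_filter, Finset.mem_univ, true_and, not_and] at hx
      by_cases h1 : c x = 1
      · rw [signZero hd hv (hx h1)]; ring
      · rw [signZero hc hu h1]; ring
    rw [hres]
    have hb : ∑ i ∈ Finset.univ.filter (fun i => c i = 1 ∧ d i = 1), u i * v i ≤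
        (Finset.univ.filter (fun i => c i = 1 ∧ d i = 1)).card • (1 : ℝ) := by
      refine Finset.sum_le_card_nsmul _ _ _ ?_
      intro i hi
      simp only [Finset.mem_filter, Finset.mem_univ, true_and] at hi
      rcases (hu i).1 hi.1 with h1 | h1 <;> rcases (hv i).1 hi.2 with h2 | h2 <;>
        rw [h1, h2] <;> norm_num
    calc ∑ i ∈ Finset.univ.filter (fun i => c i = 1 ∧ d i = 1), u i * v i
        ≤ (Finset.univ.filter (fun i => c i = 1 ∧ d i = 1)).card • (1 : ℝ) := hb
      _ ≤ 2 • (1 : ℝ) := by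
          exact nsmul_le_nsmul_left (by norm_num) hcard
      _ = 2 := by norm_num

lemma inner_sign_axis {c : Fin 9 → ℕ} (hc : c ∈ code9) {u v : Fin 9 → ℝ}
    (hu : ∀ i, (c i = 1 → (u i = 1 ∨ u i = -1)) ∧ (c i = 0 → u i = 0))
    {i : Fin 9} (hv2 : v i = 2 ∨ v i = -2) (hz : ∀ j, j ≠ i → v j = 0) :
    ∑ j, u j * v j ≤ 2 := by
  rw [Finset.sum_eq_single_of_mem i (Finset.mem_univ i)
    (fun b _ hb => by rw [hz b hb]; ring)]
  have hui : u i = 0 ∨ u i = 1 ∨ u i = -1 := by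
    rcases c01 c hc i with h | h
    · exact Or.inl ((hu i).2 h)
    · exact Or.inr ((hu i).1 h)
  rcases hui with h | h | h <;> rcases hv2 with h2 | h2 <;> rw [h, h2] <;> norm_num

theorem stmt19 :
    Set.ncard LS9 = 306 ∧
    (∀ v ∈ LS9, ∑ i, v i * v i = 4) ∧
    (∀ u ∈ LS9, ∀ v ∈ LS9, u ≠ v → ∑ i, u i * v i ≤ 2) := by
  classical
  refine ⟨?_, ?_, ?_⟩
  · rw [LS9_eq, Set.ncard_image_of_injective _ castV_inj]
    have : {w | w ∈ Lfull} = (↑Lfull.toFinset : Set (Fin 9 → ℤ)) := by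
      ext w; simp
    rw [this, Set.ncard_coe_finset, List.toFinset_card_of_nodup Lfull_nodup, Lfull_len]
  · rintro v (⟨c, hc, hv⟩ | ⟨i, hv2, hz⟩)
    · exact norm_sign hc hv
    · exact norm_axis hv2 hz
  · rintro u (⟨c, hc, hu⟩ | ⟨i, hu2, huz⟩) v (⟨d, hd, hv⟩ | ⟨i', hv2, hvz⟩) hne
    · exact inner_sign_sign hc hd hu hv hne
    · exact inner_sign_axis hc hu hv2 hvz
    · have : ∑ j, u j * v j = ∑ j, v j * u j := by
        refine Finset.sum_congr rfl (fun j _ => mul_comm _ _)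
      rw [this]
      exact inner_sign_axis hd hv hu2 huz
    · -- axis-axis
      by_cases hii : i = i'
      · subst hii
        have hsum : ∑ j, u j * v j = u i * v i := by
          refine Finset.sum_eq_single_of_mem i (Finset.mem_univ i)
            (fun b _ hb => by rw [huz b hb]; ring)
        rw [hsum]
        rcases hu2 with h1 | h1 <;> rcases hv2 with h2 | h2
        · exfalso
          apply hne
          funext j
          by_cases hj : j = i
          · subst hj; rw [h1, h2]
          · rw [huz j hj, hvz j hj]
        · rw [h1, h2]; norm_num
        · rw [h1, h2]; norm_num
        · exfalso
          apply hne
          funext j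
          by_cases hj : j = i
          · subst hj; rw [h1, h2]
          · rw [huz j hj, hvz j hj]
      · have hsum : ∑ j, u j * v j = 0 := by
          refine Finset.sum_eq_zero (fun j _ => ?_)
          by_cases hj : j = i
          · subst hj; rw [hvz _ hii]; ring
          · rw [huz j hj]; ring
        rw [hsum]; norm_num
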